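/- Let X be a finite group, V a faithful simple kX-module, Y a normal nilpotent subgroup of X acting irreducibly on V with Y/Z(Y) a minimal normal subgroup of X/Z(X), and Q an elementary Abelian p-subgroup of order p^2 with X = YQ and Y a p'-group. Then for each nontrivial a ∈ Q, C_Y(a) = Z(Y), and this leads to a contradiction since Y = ⟨C_Y(a) : a ∈ Q, a ≠ 1⟩ ≠ Z(Y). -/

import Mathlib

open CategoryTheory Limits MonoidalCategory

/-- Restriction of a representation to a subgroup. -/
noncomputable def resRep {k : Type} [Field k] {X : Type} [Group X] (Z : Subgroup X)
    (M : Rep k X) : Rep k Z :=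
  Rep.of (M.ρ.comp Z.subtype)

lemma schur_scalar {k : Type} [Field k] [IsAlgClosed k] {X : Type} [Group X]
    (V : Rep k X) [FiniteDimensional k V.V] (Y : Subgroup X)
    (hYirr : Simple (resRep Y V)) (c : X) (hc : c ∈ Subgroup.centralizer (Y : Set X)) :
    ∃ μ : k, V.ρ c = μ • (1 : V.V →ₗ[k] V.V) := by
  set S := resRep Y V with hS
  haveI : FiniteDimensional k (S ⟶ S) := by
    let π : (S ⟶ S) →ₗ[k] (V.V →ₗ[k] V.V) :=
      { toFun := fun f => f.hom.toLinearMap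
        map_add' := fun f g => rfl
        map_smul' := fun r f => rfl }
    refine FiniteDimensional.of_injective π ?_
    intro f g h
    apply Rep.hom_ext
    apply Representation.IntertwiningMap.ext
    exact h
  let f : S ⟶ S :=
    Rep.ofHom ⟨V.ρ c, fun g => by
        obtain ⟨y, hy⟩ : ∃ y : Y, y = g := ⟨g, rfl⟩
        have h1 : (y : X) * c = c * (y : X) := hc (y : X) y.2
        have h2 : V.ρ ((y : X) * c) = V.ρ (c * (y : X)) := by rw [h1]
        rw [map_mul, map_mul] at h2
        rw [← hy]
        show V.ρ c * V.ρ (y : X) = V.ρ (y : X) * V.ρ c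
        exact h2.symm⟩
  obtain ⟨μ, hμ⟩ := CategoryTheory.endomorphism_simple_eq_smul_id k f
  refine ⟨μ, ?_⟩
  have := congrArg (fun φ : S ⟶ S => φ.hom.toLinearMap) hμ
  exact this.symm

/-- The configuration `X = YQ` with `Y` a nilpotent normal `p'`-subgroup acting
irreducibly on a faithful simple module `V`, `Y/Z(Y)` minimal normal in `X/Z(X)`,
`Z(Y) ≤ Z(X)`, and `Q` elementary Abelian of order `p ^ 2`, is impossible: indeed
each `C_Y(a) = Z(Y)` for `a ∈ Q \ {1}`, contradicting
`Y = ⟨C_Y(a) : a ∈ Q \ {1}⟩ ≠ Z(Y)`. -/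
theorem nilpotent_case_contradiction
    (p : ℕ) (hp : p.Prime) (k : Type) [Field k] [IsAlgClosed k] [CharP k p]
    (X : Type) [Group X] [Finite X]
    (V : Rep k X) [FiniteDimensional k V.V] (hVsimple : Simple V)
    (hVfaithful : Function.Injective V.ρ)
    (Y : Subgroup X) (hYnorm : Y.Normal) (hYnilp : Group.IsNilpotent ↥Y)
    (hYp' : ¬ p ∣ Nat.card Y)
    (hYirr : Simple (resRep Y V))
    (hZYZX : Y ⊓ Subgroup.centralizer (Y : Set X) ≤ Subgroup.center X)
    (hmin_ne : Y.map (QuotientGroup.mk' (Subgroup.center X)) ≠ ⊥)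
    (hmin : ∀ N' : Subgroup (X ⧸ Subgroup.center X), N'.Normal →
      N' ≤ Y.map (QuotientGroup.mk' (Subgroup.center X)) →
      N' = ⊥ ∨ N' = Y.map (QuotientGroup.mk' (Subgroup.center X)))
    (Q : Subgroup X) (hQcard : Nat.card Q = p ^ 2) (hQelem : ∀ a ∈ Q, a ^ p = 1)
    (hXYQ : Y ⊔ Q = ⊤) :
    (∀ a ∈ Q, a ≠ 1 →
      Y ⊓ Subgroup.centralizer {a} = Y ⊓ Subgroup.centralizer (Y : Set X)) ∧
    False := by
  haveI : Fact p.Prime := ⟨hp⟩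
  haveI : NeZero p := ⟨hp.ne_zero⟩
  have hp2 : (1 : ℕ) < p ^ 2 := by nlinarith [hp.two_le]
  -- V is nontrivial
  have hVnt : Nontrivial V.V := by
    by_contra h
    rw [not_nontrivial_iff_subsingleton] at h
    haveI := h
    haveI : Subsingleton (CoeSort.coe V) := h
    have hall : ∀ a : X, a = 1 := fun a => hVfaithful (LinearMap.ext fun v => Subsingleton.elim _ _)
    have hQbot : Q = ⊥ := by
      apply (Subgroup.eq_bot_iff_forall _).mpr
      intro x _; exact hall x
    rw [hQbot, Subgroup.card_bot] at hQcard
    omega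
  -- p-elements of the center are trivial
  have hZtor : ∀ a : X, a ∈ Subgroup.center X → a ^ p = 1 → a = 1 := by
    intro a haZ hap
    have hacent : a ∈ Subgroup.centralizer (Y : Set X) :=
      Subgroup.mem_centralizer_iff.mpr fun y _ => Subgroup.mem_center_iff.mp haZ y
    obtain ⟨μ, hμ⟩ := schur_scalar V Y hYirr a hacent
    have h1 : V.ρ a ^ p = 1 := by rw [← map_pow, hap, map_one]
    rw [hμ, smul_pow, one_pow] at h1
    obtain ⟨v, hv⟩ := exists_ne (0 : V.V)
    have h2 : μ ^ p • v = v := by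
      have := congrArg (fun (F : V.V →ₗ[k] V.V) => F v) h1
      simpa using this
    have hμp : μ ^ p = 1 := by
      by_contra hne
      have : (μ ^ p - 1) • v = 0 := by rw [sub_smul, h2, one_smul, sub_self]
      rcases smul_eq_zero.mp this with h | h
      · exact hne (sub_eq_zero.mp h)
      · exact hv h
    have hμ1 : μ = 1 := by
      have hsub : (μ - 1) ^ p = 0 := by
        rw [sub_pow_char, hμp, one_pow, sub_self]
      exact sub_eq_zero.mp (pow_eq_zero_iff (n := p) hp.ne_zero |>.mp hsub)
    apply hVfaithful
    rw [hμ, hμ1, one_smul, map_one]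
  -- the centralizer of Y is the center
  have hcent_le : Subgroup.centralizer (Y : Set X) ≤ Subgroup.center X := by
    intro c hc
    obtain ⟨μ, hμ⟩ := schur_scalar V Y hYirr c hc
    rw [Subgroup.mem_center_iff]
    intro g
    apply hVfaithful
    rw [map_mul, map_mul, hμ, smul_mul_assoc, mul_smul_comm, one_mul, mul_one]
  exfalso
  -- quotient setup
  set Z := Subgroup.center X with hZ
  set π := QuotientGroup.mk' Z with hπ
  set W : Subgroup (X ⧸ Z) := Y.map π with hWdef
  haveI hWnorm : W.Normal := Subgroup.Normal.map hYnorm π (QuotientGroup.mk'_surjective Z)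
  haveI hWnilp : Group.IsNilpotent ↥W :=
    nilpotent_of_surjective (π.subgroupMap Y) (MonoidHom.subgroupMap_surjective π Y)
  -- W is commutative
  have hWcomm : ∀ w₁ ∈ W, ∀ w₂ ∈ W, w₁ * w₂ = w₂ * w₁ := by
    rcases hmin ⁅W, W⁆ inferInstance (Subgroup.commutator_le_left W W) with h | h
    · intro w₁ h₁ w₂ h₂
      have h3 := Subgroup.commutator_eq_bot_iff_le_centralizer.mp h h₁
      exact (Subgroup.mem_centralizer_iff.mp h3 w₂ h₂).symm
    · exfalso
      have h1 : (commutator ↥W).map W.subtype = (⊤ : Subgroup ↥W).map W.subtype := by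
        rw [commutator_def, Subgroup.map_commutator]
        have h2 : (⊤ : Subgroup ↥W).map W.subtype = W := by
          rw [← MonoidHom.range_eq_map, Subgroup.range_subtype]
        rw [h2, h]
      have h3 : commutator ↥W = ⊤ :=
        Subgroup.map_injective W.subtype_injective h1
      have hds : ∀ n, derivedSeries ↥W n = ⊤ := by
        intro n
        induction n with
        | zero => exact derivedSeries_zero ↥W
        | succ n ih => rw [derivedSeries_succ, ih, ← commutator_def, h3]
      obtain ⟨n, hn⟩ := (IsNilpotent.to_isSolvable (G := ↥W)).solvable
      rw [hds n] at hn
      apply hmin_ne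
      apply (Subgroup.eq_bot_iff_forall _).mpr
      intro x hx
      have : (⟨x, hx⟩ : ↥W) ∈ (⊥ : Subgroup ↥W) := hn ▸ Subgroup.mem_top _
      simpa using Subgroup.mem_bot.mp this
  -- decomposition X/Z = W * Q.map π
  have hsup : W ⊔ Q.map π = ⊤ := by
    rw [← Subgroup.map_sup, hXYQ]
    exact Subgroup.map_top_of_surjective π (QuotientGroup.mk'_surjective Z)
  have hdecomp : ∀ x : X ⧸ Z, ∃ w ∈ W, ∃ q ∈ Q.map π, x = w * q := by
    intro x
    have hx : x ∈ (↑(W ⊔ Q.map π) : Set (X ⧸ Z)) := by rw [hsup]; trivial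
    rw [Subgroup.normal_mul] at hx
    obtain ⟨w, hw, q, hq, h⟩ := hx
    exact ⟨w, hw, q, hq, h.symm⟩
  -- the image of Q is abelian
  have hQab : ∀ q₁ q₂ : ↥Q, (q₁ : X) * q₂ = q₂ * q₁ := by
    intro q₁ q₂
    exact congrArg Subtype.val (IsPGroup.commutative_of_card_eq_prime_sq hQcard q₁ q₂)
  have hQπcomm : ∀ x ∈ Q.map π, ∀ y ∈ Q.map π, x * y = y * x := by
    rintro _ ⟨q₁, hq₁, rfl⟩ _ ⟨q₂, hq₂, rfl⟩
    rw [← map_mul, ← map_mul]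
    exact congrArg π (hQab ⟨q₁, hq₁⟩ ⟨q₂, hq₂⟩)
  have hQπpow : ∀ x ∈ Q.map π, x ^ p = 1 := by
    rintro _ ⟨q, hq, rfl⟩
    rw [← map_pow, hQelem q hq, map_one]
  -- every nontrivial element of the image of Q acts without fixed points on W
  have hfree : ∀ a : X ⧸ Z, a ∈ Q.map π → a ≠ 1 → W ⊓ Subgroup.centralizer {a} = ⊥ := by
    intro a haQ hane
    have hSnorm : (W ⊓ Subgroup.centralizer {a}).Normal := by
      constructor
      intro s hs x
      obtain ⟨hsW, hsC⟩ := hs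
      have hsa : Commute s a := Subgroup.mem_centralizer_iff.mp hsC a rfl |>.symm
      obtain ⟨w, hw, q, hq, rfl⟩ := hdecomp x
      have h1 : q * s * q⁻¹ ∈ W := hWnorm.conj_mem s hsW q
      have hqa : Commute q a := hQπcomm q hq a haQ
      have e : (w * q) * s * (w * q)⁻¹ = w * (q * s * q⁻¹) * w⁻¹ := by group
      have h2 : w * (q * s * q⁻¹) * w⁻¹ = q * s * q⁻¹ := by
        rw [hWcomm w hw _ h1]
        group
      rw [e, h2]
      refine ⟨h1, Subgroup.mem_centralizer_iff.mpr ?_⟩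
      intro t ht
      rw [Set.mem_singleton_iff] at ht
      subst ht
      exact ((hqa.mul_left hsa).mul_left hqa.inv_left).symm.eq
    rcases hmin _ hSnorm inf_le_left with hbot | htop
    · exact hbot
    · exfalso
      obtain ⟨a₀, ha₀Q, rfl⟩ := haQ
      have ha₀cent : a₀ ∈ Subgroup.centralizer (Y : Set X) := by
        rw [Subgroup.mem_centralizer_iff]
        intro y hy
        set c := y * a₀ * y⁻¹ * a₀⁻¹ with hc
        have hcY : c ∈ Y := by
          have h1 : a₀ * y⁻¹ * a₀⁻¹ ∈ Y := hYnorm.conj_mem y⁻¹ (inv_mem hy) a₀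
          have h2 : y * (a₀ * y⁻¹ * a₀⁻¹) ∈ Y := mul_mem hy h1
          have e : c = y * (a₀ * y⁻¹ * a₀⁻¹) := by rw [hc]; group
          rw [e]; exact h2
        have hπyW : π y ∈ W ⊓ Subgroup.centralizer {π a₀} := by
          rw [htop]; exact ⟨y, hy, rfl⟩
        have hcomm : π a₀ * π y = π y * π a₀ :=
          Subgroup.mem_centralizer_iff.mp hπyW.2 (π a₀) rfl
        have hcZ : c ∈ Z := by
          have hπc : π c = 1 := by
            rw [hc, map_mul, map_mul, map_mul, map_inv, map_inv,
              show π y * π a₀ = π a₀ * π y from hcomm.symm]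
            group
          exact (QuotientGroup.eq_one_iff c).mp hπc
        have hcZc : ∀ g : X, g * c = c * g := Subgroup.mem_center_iff.mp hcZ
        have hkey : ∀ n : ℕ, y * a₀ ^ n = c ^ n * a₀ ^ n * y := by
          intro n
          induction n with
          | zero => simp
          | succ n ih =>
            have h2 : y * a₀ = c * a₀ * y := by rw [hc]; group
            calc y * a₀ ^ (n + 1) = (y * a₀ ^ n) * a₀ := by rw [pow_succ]; group
              _ = c ^ n * a₀ ^ n * (y * a₀) := by rw [ih]; group
              _ = c ^ n * (a₀ ^ n * c) * a₀ * y := by rw [h2]; group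
              _ = c ^ n * (c * a₀ ^ n) * a₀ * y := by rw [hcZc (a₀ ^ n)]
              _ = c ^ (n + 1) * a₀ ^ (n + 1) * y := by rw [pow_succ, pow_succ]; group
        have hcp : c ^ p = 1 := by
          have h3 := hkey p
          rw [hQelem a₀ ha₀Q] at h3
          simp only [mul_one] at h3
          exact right_eq_mul.mp h3
        have hcard : c ^ (Nat.card ↥Y) = 1 := by
          have h4 := pow_card_eq_one' (G := ↥Y) (x := ⟨c, hcY⟩)
          have h5 : ((⟨c, hcY⟩ : ↥Y) : X) ^ (Nat.card ↥Y) = 1 := by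
            rw [← SubmonoidClass.coe_pow, h4, OneMemClass.coe_one]
          exact h5
        have hcop : Nat.Coprime p (Nat.card ↥Y) := hp.coprime_iff_not_dvd.mpr hYp'
        have hdvd : orderOf c ∣ 1 := by
          have g1 : orderOf c ∣ p := orderOf_dvd_of_pow_eq_one hcp
          have g2 : orderOf c ∣ Nat.card ↥Y := orderOf_dvd_of_pow_eq_one hcard
          exact hcop ▸ Nat.dvd_gcd g1 g2
        have hc1 : c = 1 := orderOf_eq_one_iff.mp (Nat.dvd_one.mp hdvd)
        have h6 : y * a₀ * y⁻¹ * a₀⁻¹ = 1 := by rw [← hc]; exact hc1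
        calc y * a₀ = (y * a₀ * y⁻¹ * a₀⁻¹) * (a₀ * y) := by group
          _ = a₀ * y := by rw [h6, one_mul]
      exact hane ((QuotientGroup.eq_one_iff a₀).mpr (hcent_le ha₀cent))
  -- choose suitable elements a, b in the image of Q
  have hQπinj : ∀ q ∈ Q, π q = 1 → q = 1 := by
    intro q hq h1
    exact hZtor q ((QuotientGroup.eq_one_iff q).mp h1) (hQelem q hq)
  obtain ⟨b, hbQ, hbne⟩ : ∃ b ∈ Q.map π, b ≠ 1 := by
    by_contra h
    push_neg at h
    have hQbot : Q = ⊥ := (Subgroup.eq_bot_iff_forall _).mpr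
      (fun q hq => hQπinj q hq (h (π q) ⟨q, hq, rfl⟩))
    rw [hQbot, Subgroup.card_bot] at hQcard
    omega
  obtain ⟨a, haQ, hanb⟩ : ∃ a ∈ Q.map π, a ∉ Subgroup.zpowers b := by
    by_contra h
    push_neg at h
    have hF : ∀ q : ↥Q, π (q : X) ∈ Subgroup.zpowers b := fun q => h _ ⟨q, q.2, rfl⟩
    have hFinj : Function.Injective
        (fun q : ↥Q => (⟨π q, hF q⟩ : ↥(Subgroup.zpowers b))) := by
      intro q₁ q₂ hq
      have h1 : π (q₁ : X) = π q₂ := congrArg Subtype.val hq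
      have h2 : π ((q₁ : X) * (q₂ : X)⁻¹) = 1 := by
        rw [map_mul, map_inv, h1, mul_inv_cancel]
      have h3 : (q₁ : X) * (q₂ : X)⁻¹ = 1 :=
        hQπinj _ (mul_mem q₁.2 (inv_mem q₂.2)) h2
      exact Subtype.ext (mul_inv_eq_one.mp h3)
    have hcard2 := Nat.card_le_card_of_injective _ hFinj
    rw [hQcard, Nat.card_zpowers] at hcard2
    have hbp : b ^ p = 1 := hQπpow b hbQ
    have hble : orderOf b ≤ p := Nat.le_of_dvd hp.pos (orderOf_dvd_of_pow_eq_one hbp)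
    nlinarith [hp.two_le]
  have hane : a ≠ 1 := fun h => hanb (h ▸ one_mem _)
  have habj : ∀ j : ℕ, a * b ^ j ≠ 1 := by
    intro j h
    exact hanb ((eq_inv_of_mul_eq_one_left h).symm ▸
      inv_mem (Subgroup.pow_mem _ (Subgroup.mem_zpowers b) j))
  have hab : a * b = b * a := hQπcomm a haQ b hbQ
  have habjQ : ∀ j : ℕ, a * b ^ j ∈ Q.map π := fun j => mul_mem haQ (pow_mem hbQ j)
  -- the ring of additive endomorphisms of W
  letI : CommGroup ↥W :=
    { (inferInstance : Group ↥W) with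
      mul_comm := fun x y => Subtype.ext (hWcomm x x.2 y y.2) }
  have conj_mem : ∀ (x : X ⧸ Z) (w : ↥W), x * (w : X ⧸ Z) * x⁻¹ ∈ W :=
    fun x w => hWnorm.conj_mem _ w.2 x
  let g0 : (X ⧸ Z) → ↥W → ↥W := fun x w => ⟨x * (w : X ⧸ Z) * x⁻¹, conj_mem x w⟩
  have g0_mul : ∀ x (w₁ w₂ : ↥W), g0 x (w₁ * w₂) = g0 x w₁ * g0 x w₂ := by
    intro x w₁ w₂
    apply Subtype.ext
    show x * ((w₁ : X ⧸ Z) * (w₂ : X ⧸ Z)) * x⁻¹ =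
      (x * (w₁ : X ⧸ Z) * x⁻¹) * (x * (w₂ : X ⧸ Z) * x⁻¹)
    group
  let τ : (X ⧸ Z) → AddMonoid.End (Additive ↥W) := fun x =>
    AddMonoidHom.mk' (fun m => Additive.ofMul (g0 x m.toMul))
      (fun m₁ m₂ => congrArg Additive.ofMul (g0_mul x m₁.toMul m₂.toMul))
  have τ_apply : ∀ x (w : ↥W), (τ x) (Additive.ofMul w) = Additive.ofMul (g0 x w) :=
    fun x w => rfl
  have τ_mul : ∀ x y, τ (x * y) = τ x * τ y := by
    intro x y
    apply AddMonoidHom.ext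
    intro m
    show Additive.ofMul (g0 (x * y) m.toMul) = Additive.ofMul (g0 x (g0 y m.toMul))
    apply congrArg
    apply Subtype.ext
    show (x * y) * (m.toMul : X ⧸ Z) * (x * y)⁻¹ =
      x * (y * (m.toMul : X ⧸ Z) * y⁻¹) * x⁻¹
    group
  have τ_one : τ 1 = 1 := by
    apply AddMonoidHom.ext
    intro m
    show Additive.ofMul (g0 1 m.toMul) = m
    have : g0 1 m.toMul = m.toMul := by
      apply Subtype.ext
      show 1 * (m.toMul : X ⧸ Z) * 1⁻¹ = (m.toMul : X ⧸ Z)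
      group
    rw [this]
    simp
  have τ_pow : ∀ x (n : ℕ), τ x ^ n = τ (x ^ n) := by
    intro x n
    induction n with
    | zero => rw [pow_zero, pow_zero, τ_one]
    | succ n ih => rw [pow_succ, pow_succ, ih, ← τ_mul]
  have τ_fix : ∀ x, x ∈ Q.map π → x ≠ 1 →
      ∀ m : Additive ↥W, τ x m = m → m = 0 := by
    intro x hx hxne m hm
    have h1 : g0 x m.toMul = m.toMul := Additive.ofMul.injective hm
    have h2 : x * (m.toMul : X ⧸ Z) * x⁻¹ = (m.toMul : X ⧸ Z) :=
      congrArg Subtype.val h1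
    have h3 : (m.toMul : X ⧸ Z) ∈ W ⊓ Subgroup.centralizer {x} := by
      refine ⟨m.toMul.2, Subgroup.mem_centralizer_iff.mpr ?_⟩
      intro t ht
      rw [Set.mem_singleton_iff] at ht
      rw [ht]
      calc x * (m.toMul : X ⧸ Z) = (x * (m.toMul : X ⧸ Z) * x⁻¹) * x := by group
        _ = (m.toMul : X ⧸ Z) * x := by rw [h2]
    rw [hfree x hx hxne] at h3
    have h4 : m.toMul = (1 : ↥W) := Subtype.ext (Subgroup.mem_bot.mp h3)
    have h5 : Additive.ofMul m.toMul = Additive.ofMul (1 : ↥W) := by rw [h4]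
    simp only [ofMul_toMul] at h5
    rw [h5]
    rfl
  -- norm sums vanish
  haveI : Fact (1 < p) := ⟨hp.one_lt⟩
  have pow_mod : ∀ (u : AddMonoid.End (Additive ↥W)), u ^ p = 1 → ∀ n : ℕ, u ^ n = u ^ (n % p) := by
    intro u hu n
    conv_lhs => rw [← Nat.div_add_mod n p]
    rw [pow_add, pow_mul, hu, one_pow, one_mul]
  have upow_add : ∀ (u : AddMonoid.End (Additive ↥W)), u ^ p = 1 →
      ∀ i j : ZMod p, u ^ ((i + j).val) = u ^ i.val * u ^ j.val := by
    intro u hu i j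
    rw [ZMod.val_add, ← pow_mod u hu, pow_add]
  have upow_mul : ∀ (u : AddMonoid.End (Additive ↥W)), u ^ p = 1 →
      ∀ i j : ZMod p, u ^ ((i * j).val) = (u ^ i.val) ^ j.val := by
    intro u hu i j
    rw [ZMod.val_mul, ← pow_mod u hu, pow_mul]
  have hNzero : ∀ u : AddMonoid.End (Additive ↥W), u ^ p = 1 →
      (∀ m : Additive ↥W, u m = m → m = 0) →
      (∑ m : ZMod p, u ^ (m.val)) = 0 := by
    intro u hu hfix
    have hval1 : ((1 : ZMod p)).val = 1 := ZMod.val_one p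
    have h1 : u * (∑ m : ZMod p, u ^ (m.val)) = ∑ m : ZMod p, u ^ (m.val) := by
      rw [Finset.mul_sum]
      have e1 : ∀ m : ZMod p, u * u ^ (m.val) = u ^ ((m + 1).val) := by
        intro m
        rw [upow_add u hu m 1, hval1, pow_one, ← pow_succ, ← pow_succ']
      rw [Finset.sum_congr rfl (fun m _ => e1 m)]
      exact Fintype.sum_equiv (Equiv.addRight (1 : ZMod p)) _ _ (fun m => rfl)
    refine AddMonoidHom.ext (fun m => ?_)
    apply hfix
    exact DFunLike.congr_fun h1 m
  -- the main computation
  have hcp : τ a ^ p = 1 := by rw [τ_pow, hQπpow a haQ, τ_one]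
  have hdp : τ b ^ p = 1 := by rw [τ_pow, hQπpow b hbQ, τ_one]
  have hcd : Commute (τ a) (τ b) := by
    show τ a * τ b = τ b * τ a
    rw [← τ_mul, ← τ_mul, hab]
  have hNd : (∑ m : ZMod p, τ b ^ (m.val)) = 0 := hNzero _ hdp (τ_fix b hbQ hbne)
  have hNj : ∀ j : ZMod p, (∑ m : ZMod p, (τ a * τ b ^ (j.val)) ^ (m.val)) = 0 := by
    intro j
    have e1 : τ a * τ b ^ (j.val) = τ (a * b ^ (j.val)) := by rw [τ_mul, τ_pow]
    rw [e1]
    exact hNzero _ (by rw [τ_pow, hQπpow _ (habjQ j.val), τ_one])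
      (τ_fix _ (habjQ j.val) (habj j.val))
  have hmain : p • (1 : AddMonoid.End (Additive ↥W)) = 0 := by
    have h0 : ∑ j : ZMod p, ∑ m : ZMod p, (τ a * τ b ^ (j.val)) ^ (m.val) = 0 :=
      Finset.sum_eq_zero (fun j _ => hNj j)
    have h1 : ∑ j : ZMod p, ∑ m : ZMod p, (τ a * τ b ^ (j.val)) ^ (m.val)
        = ∑ m : ZMod p, τ a ^ (m.val) * (∑ j : ZMod p, τ b ^ ((j * m).val)) := by
      rw [Finset.sum_comm]
      refine Finset.sum_congr rfl (fun m _ => ?_)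
      rw [Finset.mul_sum]
      refine Finset.sum_congr rfl (fun j _ => ?_)
      rw [(hcd.pow_right j.val).mul_pow, upow_mul (τ b) hdp j m]
    have h2 : ∀ m : ZMod p, m ≠ 0 → (∑ j : ZMod p, τ b ^ ((j * m).val)) = 0 := by
      intro m hm
      have e2 := Fintype.sum_equiv (Equiv.mulRight₀ m hm)
        (fun j : ZMod p => τ b ^ ((j * m).val)) (fun j : ZMod p => τ b ^ (j.val))
        (fun j => rfl)
      exact e2.trans hNd
    have h3 : ∑ m : ZMod p, τ a ^ (m.val) * (∑ j : ZMod p, τ b ^ ((j * m).val))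
        = p • (1 : AddMonoid.End (Additive ↥W)) := by
      rw [Finset.sum_eq_single (0 : ZMod p)]
      · rw [ZMod.val_zero, pow_zero, one_mul]
        rw [Finset.sum_congr rfl (fun j _ => by rw [mul_zero, ZMod.val_zero, pow_zero])]
        rw [Finset.sum_const, Finset.card_univ, ZMod.card]
      · intro m _ hm
        rw [h2 m hm, mul_zero]
      · intro hmem
        exact absurd (Finset.mem_univ _) hmem
    rw [← h3, ← h1]
    exact h0
  -- W has exponent p, contradiction
  have hWexp : ∀ w : ↥W, w ^ p = (1 : ↥W) := by
    intro w
    have h1 := DFunLike.congr_fun hmain (Additive.ofMul w)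
    have h2 : (p • (1 : AddMonoid.End (Additive ↥W))) (Additive.ofMul w)
        = p • (Additive.ofMul w) := by
      rfl
    rw [h2, ← ofMul_pow] at h1
    have h3 : Additive.ofMul (w ^ p) = Additive.ofMul (1 : ↥W) := h1
    exact Additive.ofMul.injective h3
  have hπy_forall : ∀ x ∈ W, x = 1 := by
    intro x hx
    have h1 : x ^ p = 1 := by
      have h0 := hWexp ⟨x, hx⟩
      have h2 := congrArg Subtype.val h0
      simpa using h2
    obtain ⟨y, hy, rfl⟩ := hx
    have g1 : orderOf (π y) ∣ p := orderOf_dvd_of_pow_eq_one h1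
    have hycard : y ^ (Nat.card ↥Y) = 1 := by
      have h4 := pow_card_eq_one' (G := ↥Y) (x := ⟨y, hy⟩)
      have h5 : ((⟨y, hy⟩ : ↥Y) : X) ^ (Nat.card ↥Y) = 1 := by
        rw [← SubmonoidClass.coe_pow, h4, OneMemClass.coe_one]
      exact h5
    have g2 : orderOf (π y) ∣ Nat.card ↥Y :=
      dvd_trans (orderOf_map_dvd π y) (orderOf_dvd_of_pow_eq_one hycard)
    have hcop : Nat.Coprime p (Nat.card ↥Y) := hp.coprime_iff_not_dvd.mpr hYp'
    have hdvd1 : orderOf (π y) ∣ 1 := hcop ▸ Nat.dvd_gcd g1 g2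
    exact orderOf_eq_one_iff.mp (Nat.dvd_one.mp hdvd1)
  exact hmin_ne ((Subgroup.eq_bot_iff_forall _).mpr hπy_forall)
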